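/- Let R = DV be a decomposition obtained by the lazy reduction algorithm, with R reduced and V invertible upper-triangular. If V[τ_i, τ_j] ≠ 0 for τ_i ≠ τ_j, then low_R(τ_j) < low_R(τ_i), where a zero column has low equal to a dummy minimal value. -/

import Mathlib

open Matrix

variable {F : Type*} [Field F] [DecidableEq F] {m n : ℕ}

/-- 1-based row index of the lowest nonzero entry of column `j`;
`0` (the dummy minimal value) if the column is zero. -/
def lowNat (R : Matrix (Fin m) (Fin n) F) (j : Fin n) : ℕ :=
  (Finset.univ.filter fun i : Fin m => R i j ≠ 0).sup fun i => i.val + 1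

/-- Subtract `α` times column `i` from column `j`. -/
def addColMul {k : ℕ} (M : Matrix (Fin k) (Fin n) F) (α : F) (i j : Fin n) :
    Matrix (Fin k) (Fin n) F :=
  fun a b => if b = j then M a b - α * M a i else M a b

/-- Add `α` times row `j` to row `i`. -/
def addRowMul (M : Matrix (Fin n) (Fin n) F) (α : F) (i j : Fin n) :
    Matrix (Fin n) (Fin n) F :=
  fun a b => if a = i then M a b + α * M j b else M a b

/-- The state `(R, V, U)` maintained by the lazy reduction. -/
structure RedState (F : Type*) (m n : ℕ) where
  R : Matrix (Fin m) (Fin n) F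
  V : Matrix (Fin n) (Fin n) F
  U : Matrix (Fin n) (Fin n) F

/-- Inner while-loop of the lazy reduction for column `j`: while the column is
nonzero and some earlier column has the same low, subtract
`α = R[low, j] / R[low, i]` times column `i` from column `j` (in `R` and `V`)
and record the inverse row operation in `U`.  Each iteration strictly decreases
the low of column `j`, so fuel `m + 1` always suffices. -/
noncomputable def reduceColAux : ℕ → RedState F m n → Fin n → RedState F m n
  | 0, s, _ => s
  | fuel + 1, s, j =>
    if h : lowNat s.R j ≠ 0 ∧ ∃ i : Fin n, i < j ∧ lowNat s.R i = lowNat s.R j then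
      let i := h.2.choose
      let r : Fin m := ⟨lowNat s.R j - 1, by
        have hle : lowNat s.R j ≤ m := Finset.sup_le fun a _ => a.isLt
        have := h.1
        omega⟩
      let α := s.R r j / s.R r i
      reduceColAux fuel ⟨addColMul s.R α i j, addColMul s.V α i j, addRowMul s.U α i j⟩ j
    else s

/-- The lazy reduction algorithm: starting from `R = D`, `V = U = 1`, process
the columns in increasing order. -/
noncomputable def lazyReduce (D : Matrix (Fin m) (Fin n) F) : RedState F m n :=
  (List.finRange n).foldl (fun s j => reduceColAux (m + 1) s j) ⟨D, 1, 1⟩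

/-- The invariant maintained by the lazy reduction: columns of `V` with index
`≥ k` are still identity columns, `V` is upper triangular, and a nonzero
off-diagonal entry `V a b` forces `low b < low a`. -/
def RInv (s : RedState F m n) (k : ℕ) : Prop :=
  (∀ a b : Fin n, k ≤ b.val → s.V a b = if a = b then 1 else 0) ∧
  (∀ a b : Fin n, b < a → s.V a b = 0) ∧
  (∀ a b : Fin n, a ≠ b → s.V a b ≠ 0 → lowNat s.R b < lowNat s.R a)

lemma RInv.mono {s : RedState F m n} {k k' : ℕ} (h : RInv s k) (hk : k ≤ k') :
    RInv s k' :=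
  ⟨fun a b hb => h.1 a b (le_trans hk hb), h.2.1, h.2.2⟩

lemma le_lowNat {R : Matrix (Fin m) (Fin n) F} {b : Fin n} {a : Fin m}
    (h : R a b ≠ 0) : a.val + 1 ≤ lowNat R b := by
  unfold lowNat
  exact Finset.le_sup (f := fun i : Fin m => i.val + 1) (by simp [h])

lemma lowNat_pivot {R : Matrix (Fin m) (Fin n) F} {b : Fin n}
    (h : lowNat R b ≠ 0) : ∃ a : Fin m, R a b ≠ 0 ∧ a.val + 1 = lowNat R b := by
  have hne : (Finset.univ.filter fun i : Fin m => R i b ≠ 0).Nonempty := by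
    by_contra hc
    rw [Finset.not_nonempty_iff_eq_empty] at hc
    apply h
    unfold lowNat
    rw [hc]
    simp
  obtain ⟨a, ha, hs⟩ := Finset.exists_mem_eq_sup _ hne fun i : Fin m => i.val + 1
  exact ⟨a, by simpa using ha, hs.symm⟩

lemma lowNat_addColMul_ne {M : Matrix (Fin m) (Fin n) F} {α : F} {i j b : Fin n}
    (hb : b ≠ j) : lowNat (addColMul M α i j) b = lowNat M b := by
  unfold lowNat
  congr 1
  apply Finset.filter_congr
  intro a _
  simp [addColMul, hb]

lemma lowNat_decrease (R : Matrix (Fin m) (Fin n) F) (i j : Fin n) (r : Fin m)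
    (hL0 : lowNat R j ≠ 0) (hLi : lowNat R i = lowNat R j)
    (hr : r.val + 1 = lowNat R j) :
    lowNat (addColMul R (R r j / R r i) i j) j < lowNat R j := by
  have hrj : R r j ≠ 0 := by
    obtain ⟨a, ha, he⟩ := lowNat_pivot hL0
    have : a = r := Fin.ext (by omega)
    rwa [← this]
  have hri : R r i ≠ 0 := by
    obtain ⟨a, ha, he⟩ := lowNat_pivot (R := R) (b := i) (by rw [hLi]; exact hL0)
    rw [hLi] at he
    have : a = r := Fin.ext (by omega)
    rwa [← this]
  have key : lowNat (addColMul R (R r j / R r i) i j) j ≤ lowNat R j - 1 := by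
    apply Finset.sup_le
    intro a ha
    rw [Finset.mem_filter] at ha
    have ha' : R a j - (R r j / R r i) * R a i ≠ 0 := by
      simpa [addColMul] using ha.2
    have har : a ≠ r := by
      intro hh
      subst hh
      apply ha'
      rw [div_mul_cancel₀ _ hri]
      ring
    have hle : a.val + 1 ≤ lowNat R j := by
      by_cases h1 : R a j ≠ 0
      · exact le_lowNat h1
      · have h2 : R a i ≠ 0 := by
          intro h2
          apply ha'
          push_neg at h1
          rw [h1, h2]
          ring
        calc a.val + 1 ≤ lowNat R i := le_lowNat h2
          _ = lowNat R j := hLi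
    have hne : a.val ≠ r.val := fun hh => har (Fin.ext hh)
    omega
  omega

lemma op_inv (s : RedState F m n) (i j : Fin n) (r : Fin m) (α : F)
    (U : Matrix (Fin n) (Fin n) F)
    (hij : i < j) (hL0 : lowNat s.R j ≠ 0) (hLi : lowNat s.R i = lowNat s.R j)
    (hr : r.val + 1 = lowNat s.R j) (hα : α = s.R r j / s.R r i)
    (hInv : RInv s (j.val + 1)) :
    RInv ⟨addColMul s.R α i j, addColMul s.V α i j, U⟩ (j.val + 1) := by
  obtain ⟨hI, hT, hB⟩ := hInv
  have hdec : lowNat (addColMul s.R α i j) j < lowNat s.R j := by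
    rw [hα]; exact lowNat_decrease s.R i j r hL0 hLi hr
  have hVj0 : ∀ a : Fin n, a ≠ j → s.V a j ≠ 0 → lowNat s.R j < lowNat s.R a :=
    fun a ha hv => hB a j ha hv
  refine ⟨?_, ?_, ?_⟩
  · intro a b hb
    have hbj : b ≠ j := fun hh => by omega
    simpa [addColMul, hbj] using hI a b hb
  · intro a b hba
    by_cases hbj : b = j
    · subst hbj
      have h1 : s.V a b = 0 := hT a b hba
      have h2 : s.V a i = 0 := hT a i (lt_trans hij hba)
      simp [addColMul, h1, h2]
    · simpa [addColMul, hbj] using hT a b hba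
  · intro a b hab hV
    by_cases hbj : b = j
    · subst hbj
      have hV' : s.V a b - α * s.V a i ≠ 0 := by simpa [addColMul] using hV
      rw [lowNat_addColMul_ne hab]
      by_cases h1 : s.V a b ≠ 0
      · calc lowNat (addColMul s.R α i b) b < lowNat s.R b := hdec
          _ < lowNat s.R a := hB a b hab h1
      · push_neg at h1
        have h2 : s.V a i ≠ 0 := by
          intro h2
          apply hV'
          rw [h1, h2]; ring
        by_cases hai : a = i
        · subst hai
          calc lowNat (addColMul s.R α a b) b < lowNat s.R b := hdec
            _ = lowNat s.R a := hLi.symm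
        · have haj' : a ≠ b := hab
          have hlia : lowNat s.R i < lowNat s.R a := by
            apply hB a i hai h2
          calc lowNat (addColMul s.R α i b) b < lowNat s.R b := hdec
            _ = lowNat s.R i := hLi.symm
            _ < lowNat s.R a := hlia
    · have hVab : s.V a b ≠ 0 := by simpa [addColMul, hbj] using hV
      have haj : a ≠ j := by
        intro hh
        subst hh
        rcases lt_trichotomy b a with h | h | h
        · exact hVab (hT a b h)
        · exact hab h.symm
        · have := hI a b (by omega)
          rw [if_neg (Fin.ne_of_lt h)] at this
          exact hVab this
      rw [lowNat_addColMul_ne hbj, lowNat_addColMul_ne haj]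
      exact hB a b hab hVab

lemma reduceColAux_inv : ∀ (fuel : ℕ) (s : RedState F m n) (j : Fin n),
    RInv s (j.val + 1) → RInv (reduceColAux fuel s j) (j.val + 1) := by
  intro fuel
  induction fuel with
  | zero => intro s j h; simpa [reduceColAux] using h
  | succ fuel ih =>
    intro s j hInv
    rw [reduceColAux]
    split_ifs with h
    · apply ih
      obtain ⟨hi1, hi2⟩ := h.2.choose_spec
      exact op_inv s h.2.choose j ⟨lowNat s.R j - 1, by
          have hle : lowNat s.R j ≤ m := Finset.sup_le fun a _ => a.isLt
          have := h.1
          omega⟩ _ _ hi1 h.1 hi2 (by have := h.1; simp; omega) rfl hInv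
    · exact hInv

lemma fold_inv : ∀ (l : List (Fin n)) (s : RedState F m n) (k : ℕ),
    RInv s k → (∀ j ∈ l, k ≤ j.val) → l.Pairwise (· < ·) →
    ∃ k', RInv (l.foldl (fun s j => reduceColAux (m + 1) s j) s) k' := by
  intro l
  induction l with
  | nil => intro s k h _ _; exact ⟨k, h⟩
  | cons j t ih =>
    intro s k h hmem hpw
    rw [List.foldl_cons]
    rw [List.pairwise_cons] at hpw
    apply ih _ (j.val + 1)
    · exact reduceColAux_inv _ s j (h.mono (by
        have := hmem j (List.mem_cons_self (a := j) (l := t)); omega))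
    · intro j' hj'
      have := hpw.1 j' hj'
      omega
    · exact hpw.2

/-- If `R = DV` is obtained by the lazy reduction (`R` reduced, `V` invertible
upper-triangular) and `V[τi, τj] ≠ 0` for `τi ≠ τj`, then
`low_R(τj) < low_R(τi)` (zero columns having the dummy minimal low `0`). -/
theorem lazy_V_nonzero_implies_low_lt (D : Matrix (Fin m) (Fin n) F) (τi τj : Fin n)
    (hne : τi ≠ τj) (hV : (lazyReduce D).V τi τj ≠ 0) :
    lowNat (lazyReduce D).R τj < lowNat (lazyReduce D).R τi := by
  have h0 : RInv (⟨D, 1, 1⟩ : RedState F m n) 0 := by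
    refine ⟨fun a b _ => Matrix.one_apply, fun a b hba => Matrix.one_apply_ne (Ne.symm (Fin.ne_of_lt hba)), ?_⟩
    intro a b hab hv
    exact absurd (Matrix.one_apply_ne hab) hv
  obtain ⟨k', hk'⟩ := fold_inv (List.finRange n) ⟨D, 1, 1⟩ 0 h0
    (fun j _ => Nat.zero_le _) (List.pairwise_lt_finRange n)
  exact hk'.2.2 τi τj hne hV
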